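/- For any nonnegative integer sequence (d₁, …, dₙ) with d₁ + ⋯ + dₙ = n−1, the number of rooted labeled trees on {1,…,n} in which vertex i has exactly dᵢ children for every i equals the multinomial coefficient (n−1)!/(d₁!·d₂!⋯dₙ!). -/

import Mathlib

open Finset Function Nat

section TreeAux

variable {n : ℕ}

/-- Rooted tree structure on the vertex subset `V` of `Fin n`, given by a parent
function `p` (identity outside `V`) and a root `r`. -/
def TreeOn (V : Finset (Fin n)) (p : Fin n → Fin n) (r : Fin n) : Prop :=
  r ∈ V ∧ (∀ v, v ∉ V → p v = v) ∧ (∀ v ∈ V, p v ∈ V) ∧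
  (∀ v ∈ V, (p v = v ↔ v = r)) ∧ (∀ v ∈ V, ∃ l, p^[l] v = r)

/-- Vertex `i` has `d i` children, for every `i ∈ V`. -/
def DegOn (V : Finset (Fin n)) (p : Fin n → Fin n) (d : Fin n → ℕ) : Prop :=
  ∀ i ∈ V, (V.filter (fun v => p v = i ∧ v ≠ i)).card = d i

lemma iter_agree {p q : Fin n → Fin n} {S : Finset (Fin n)}
    (hS : ∀ v ∈ S, p v ∈ S) (hagree : ∀ v ∈ S, q v = p v) :
    ∀ k, ∀ v ∈ S, q^[k] v = p^[k] v ∧ p^[k] v ∈ S := by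
  intro k
  induction k with
  | zero => intro v hv; exact ⟨rfl, hv⟩
  | succ k ih =>
    intro v hv
    obtain ⟨h1, h2⟩ := ih v hv
    rw [Function.iterate_succ_apply', Function.iterate_succ_apply', h1, hagree _ h2]
    exact ⟨rfl, hS _ h2⟩

lemma root_has_child {V : Finset (Fin n)} {p : Fin n → Fin n} {r : Fin n}
    (ht : TreeOn V p r) (hc : 2 ≤ V.card) : ∃ u ∈ V, p u = r ∧ u ≠ r := by
  obtain ⟨hr, _, hmap, _, hreach⟩ := ht
  obtain ⟨u, hu, hur⟩ := Finset.exists_mem_ne (show 1 < V.card by omega) r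
  obtain ⟨l, hl⟩ := hreach u hu
  have hP : ∃ l, p^[l] u = r := ⟨l, hl⟩
  classical
  set l₀ := Nat.find hP with hl₀
  have hfind := Nat.find_spec hP
  have hl₀0 : l₀ ≠ 0 := by
    intro h0
    have := hfind
    rw [hl₀] at *
    rw [h0] at this
    exact hur this
  have hiter : ∀ k, p^[k] u ∈ V := by
    intro k
    induction k with
    | zero => exact hu
    | succ k ih => rw [Function.iterate_succ_apply']; exact hmap _ ih
  refine ⟨p^[l₀ - 1] u, hiter _, ?_, ?_⟩
  · rw [← Function.iterate_succ_apply' p (l₀ - 1) u, Nat.succ_eq_add_one,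
      Nat.sub_add_cancel (Nat.one_le_iff_ne_zero.mpr hl₀0)]
    exact hfind
  · intro hw
    exact absurd hw (Nat.find_min hP (by omega))

lemma parent_mem {V : Finset (Fin n)} {p : Fin n → Fin n} {r v₀ : Fin n} {d : Fin n → ℕ}
    (hc : 2 ≤ V.card) (hv₀ : v₀ ∈ V) (hd0 : d v₀ = 0)
    (ht : TreeOn V p r) (hdeg : DegOn V p d) : p v₀ ∈ V.erase v₀ := by
  have hv₀r : v₀ ≠ r := by
    rintro rfl
    obtain ⟨u, hu, hpu, hur⟩ := root_has_child ht hc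
    have h0 := hdeg v₀ hv₀
    rw [hd0, Finset.card_eq_zero, Finset.filter_eq_empty_iff] at h0
    exact h0 hu ⟨hpu, hur⟩
  refine Finset.mem_erase.mpr ⟨?_, ht.2.2.1 v₀ hv₀⟩
  intro h
  exact hv₀r ((ht.2.2.2.1 v₀ hv₀).mp h)

lemma shrink {V : Finset (Fin n)} {p : Fin n → Fin n} {r v₀ i : Fin n} {d : Fin n → ℕ}
    (hc : 2 ≤ V.card) (hv₀ : v₀ ∈ V) (hd0 : d v₀ = 0) (hi : i ∈ V.erase v₀)
    (ht : TreeOn V p r) (hdeg : DegOn V p d) (hpv₀ : p v₀ = i) :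
    TreeOn (V.erase v₀) (Function.update p v₀ v₀) r ∧
      DegOn (V.erase v₀) (Function.update p v₀ v₀) (Function.update d i (d i - 1)) := by
  classical
  have hv₀r : v₀ ≠ r := by
    rintro rfl
    obtain ⟨u, hu, hpu, hur⟩ := root_has_child ht hc
    have h0 := hdeg v₀ hv₀
    rw [hd0, Finset.card_eq_zero, Finset.filter_eq_empty_iff] at h0
    exact h0 hu ⟨hpu, hur⟩
  obtain ⟨hr, hout, hmap, hfix, hreach⟩ := ht
  have hnochild : ∀ v ∈ V, v ≠ v₀ → p v ≠ v₀ := by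
    intro v hv hvv₀ hpv
    have h0 := hdeg v₀ hv₀
    rw [hd0, Finset.card_eq_zero, Finset.filter_eq_empty_iff] at h0
    exact h0 hv ⟨hpv, hvv₀⟩
  have hmap' : ∀ v ∈ V.erase v₀, p v ∈ V.erase v₀ := by
    intro v hv
    rw [Finset.mem_erase] at hv ⊢
    exact ⟨hnochild v hv.2 hv.1, hmap v hv.2⟩
  have hagree : ∀ v ∈ V.erase v₀, Function.update p v₀ v₀ v = p v := by
    intro v hv
    exact Function.update_of_ne (Finset.mem_erase.mp hv).1 _ _
  refine ⟨⟨Finset.mem_erase.mpr ⟨(Ne.symm hv₀r), hr⟩, ?_, ?_, ?_, ?_⟩, ?_⟩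
  · intro v hv
    by_cases h : v = v₀
    · subst h; simp
    · rw [Finset.mem_erase, not_and_or] at hv
      rcases hv with h' | h'
      · exact absurd (not_not.mp (by simpa using h')) h
      · rw [Function.update_of_ne h]; exact hout v h'
  · intro v hv; rw [hagree v hv]; exact hmap' v hv
  · intro v hv; rw [hagree v hv]; exact hfix v (Finset.mem_of_mem_erase hv)
  · intro v hv
    obtain ⟨l, hl⟩ := hreach v (Finset.mem_of_mem_erase hv)
    exact ⟨l, by rw [(iter_agree hmap' hagree l v hv).1, hl]⟩
  · intro j hj
    have hjv₀ : j ≠ v₀ := (Finset.mem_erase.mp hj).1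
    have hfe : (V.erase v₀).filter (fun v => Function.update p v₀ v₀ v = j ∧ v ≠ j)
        = (V.filter (fun v => p v = j ∧ v ≠ j)).erase v₀ := by
      rw [← Finset.filter_erase]
      apply Finset.filter_congr
      intro v hv
      rw [hagree v hv]
    rw [hfe]
    by_cases h : j = i
    · subst h
      have hv₀mem : v₀ ∈ V.filter (fun v => p v = j ∧ v ≠ j) := by
        simp only [Finset.mem_filter]
        exact ⟨hv₀, hpv₀, Ne.symm hjv₀⟩
      rw [Finset.card_erase_of_mem hv₀mem, hdeg j (Finset.mem_of_mem_erase hj),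
        Function.update_self]
    · rw [Finset.erase_eq_of_notMem, hdeg j (Finset.mem_of_mem_erase hj),
        Function.update_of_ne h]
      simp only [Finset.mem_filter, not_and]
      intro _ hp
      exact absurd (hpv₀ ▸ hp) (Ne.symm h)

lemma grow {V : Finset (Fin n)} {q : Fin n → Fin n} {r v₀ i : Fin n} {d : Fin n → ℕ}
    (hv₀ : v₀ ∈ V) (hd0 : d v₀ = 0) (hi : i ∈ V.erase v₀) (hdi : d i ≠ 0)
    (ht : TreeOn (V.erase v₀) q r)
    (hdeg : DegOn (V.erase v₀) q (Function.update d i (d i - 1))) :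
    TreeOn V (Function.update q v₀ i) r ∧ DegOn V (Function.update q v₀ i) d := by
  classical
  obtain ⟨hr, hout, hmap, hfix, hreach⟩ := ht
  have hiv₀ : i ≠ v₀ := (Finset.mem_erase.mp hi).1
  have hrv₀ : r ≠ v₀ := (Finset.mem_erase.mp hr).1
  have hagree : ∀ v ∈ V.erase v₀, Function.update q v₀ i v = q v := by
    intro v hv
    exact Function.update_of_ne (Finset.mem_erase.mp hv).1 _ _
  refine ⟨⟨Finset.mem_of_mem_erase hr, ?_, ?_, ?_, ?_⟩, ?_⟩
  · intro v hv
    have hvv₀ : v ≠ v₀ := fun h => hv (h ▸ hv₀)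
    rw [Function.update_of_ne hvv₀]
    exact hout v fun h => hv (Finset.mem_of_mem_erase h)
  · intro v hv
    by_cases h : v = v₀
    · subst h; rw [Function.update_self]; exact Finset.mem_of_mem_erase hi
    · rw [Function.update_of_ne h]
      exact Finset.mem_of_mem_erase (hmap v (Finset.mem_erase.mpr ⟨h, hv⟩))
  · intro v hv
    by_cases h : v = v₀
    · subst h
      rw [Function.update_self]
      constructor
      · intro h'; exact absurd h' hiv₀
      · intro h'; exact absurd h'.symm hrv₀
    · rw [Function.update_of_ne h]
      exact hfix v (Finset.mem_erase.mpr ⟨h, hv⟩)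
  · intro v hv
    by_cases h : v = v₀
    · subst h
      obtain ⟨l, hl⟩ := hreach i hi
      refine ⟨l + 1, ?_⟩
      rw [Function.iterate_succ_apply, Function.update_self,
        (iter_agree hmap hagree l i hi).1, hl]
    · obtain ⟨l, hl⟩ := hreach v (Finset.mem_erase.mpr ⟨h, hv⟩)
      exact ⟨l, by rw [(iter_agree hmap hagree l v (Finset.mem_erase.mpr ⟨h, hv⟩)).1, hl]⟩
  · intro j hj
    have hVins : V = insert v₀ (V.erase v₀) := (Finset.insert_erase hv₀).symm
    have hfe : V.filter (fun v => Function.update q v₀ i v = j ∧ v ≠ j)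
        = if i = j ∧ v₀ ≠ j then
            insert v₀ ((V.erase v₀).filter (fun v => q v = j ∧ v ≠ j))
          else (V.erase v₀).filter (fun v => q v = j ∧ v ≠ j) := by
      conv_lhs => rw [hVins]
      rw [Finset.filter_insert, Function.update_self,
        Finset.filter_congr (fun v hv => by rw [hagree v hv])]
    by_cases hjv₀ : j = v₀
    · subst hjv₀
      rw [hfe, if_neg (by simp), hd0, Finset.card_eq_zero, Finset.filter_eq_empty_iff]
      intro v hv hcon
      exact (Finset.mem_erase.mp (hmap v hv)).1 (hcon.1)
    · have hj' : j ∈ V.erase v₀ := Finset.mem_erase.mpr ⟨hjv₀, hj⟩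
      by_cases hji : j = i
      · subst hji
        rw [hfe, if_pos ⟨rfl, Ne.symm hjv₀⟩, Finset.card_insert_of_notMem
          (fun h => (Finset.mem_erase.mp (Finset.mem_of_mem_filter _ h)).1 rfl)]
        have := hdeg j hj'
        rw [Function.update_self] at this
        rw [this]
        omega
      · rw [hfe, if_neg (fun h => hji (h.1.symm))]
        have := hdeg j hj'
        rwa [Function.update_of_ne hji] at this

lemma nat_card_sigma {ι : Type*} [Fintype ι] (f : ι → Type*) [∀ i, Finite (f i)] :
    Nat.card (Σ i, f i) = ∑ i, Nat.card (f i) := by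
  classical
  letI : ∀ i, Fintype (f i) := fun i => Fintype.ofFinite (f i)
  simp [Nat.card_eq_fintype_card]

lemma mult_rec {α : Type*} [DecidableEq α] {V : Finset α} {v₀ : α} {d : α → ℕ}
    (hv₀ : v₀ ∈ V) (hd0 : d v₀ = 0) (hsum : ∑ i ∈ V, d i = V.card - 1) (hc : 2 ≤ V.card) :
    ∑ i ∈ (V.erase v₀).filter (fun i => d i ≠ 0),
      Nat.multinomial (V.erase v₀) (Function.update d i (d i - 1)) = Nat.multinomial V d := by
  classical
  set m := V.card - 1 with hm
  have hm1 : 1 ≤ m := by omega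
  have hsum' : ∑ i ∈ V.erase v₀, d i = m := by
    have h := Finset.add_sum_erase V d hv₀
    omega
  set P := ∏ j ∈ V.erase v₀, (d j)! with hPdef
  have hP : ∏ j ∈ V, (d j)! = P := by
    rw [← Finset.mul_prod_erase V _ hv₀, hd0]
    simp [hPdef]
  have hPpos : 0 < P := Finset.prod_pos fun j _ => Nat.factorial_pos _
  have key : ∀ i ∈ (V.erase v₀).filter (fun i => d i ≠ 0),
      P * Nat.multinomial (V.erase v₀) (Function.update d i (d i - 1)) = d i * (m - 1)! := by
    intro i hi
    obtain ⟨hiV', hdi⟩ := Finset.mem_filter.mp hi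
    have hcongr : ∏ j ∈ (V.erase v₀).erase i, (Function.update d i (d i - 1) j)!
        = ∏ j ∈ (V.erase v₀).erase i, (d j)! :=
      Finset.prod_congr rfl
        (fun j hj => by rw [Function.update_of_ne (Finset.mem_erase.mp hj).1])
    have hprod : P = d i * ∏ j ∈ V.erase v₀, (Function.update d i (d i - 1) j)! := by
      rw [hPdef, ← Finset.mul_prod_erase _ _ hiV',
        ← Finset.mul_prod_erase _ (fun j => (Function.update d i (d i - 1) j)!) hiV',
        Function.update_self, hcongr,
        ← Nat.mul_factorial_pred hdi, mul_assoc]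
    have hsum'' : ∑ j ∈ V.erase v₀, Function.update d i (d i - 1) j = m - 1 := by
      rw [Finset.sum_update_of_mem hiV', ← Finset.erase_eq]
      have h := Finset.add_sum_erase (V.erase v₀) d hiV'
      omega
    rw [hprod, mul_assoc, Nat.multinomial_spec, hsum'']
  have hPL : P * ∑ i ∈ (V.erase v₀).filter (fun i => d i ≠ 0),
      Nat.multinomial (V.erase v₀) (Function.update d i (d i - 1)) = m ! := by
    rw [Finset.mul_sum, Finset.sum_congr rfl key, ← Finset.sum_mul,
      Finset.sum_filter_ne_zero, hsum', Nat.mul_factorial_pred (by omega)]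
  have hPR : P * Nat.multinomial V d = m ! := by
    rw [← hP, Nat.multinomial_spec, hsum]
  exact Nat.eq_of_mul_eq_mul_left hPpos (hPL.trans hPR.symm)

lemma main_count (n : ℕ) : ∀ (k : ℕ) (V : Finset (Fin n)), V.card = k → V.Nonempty →
    ∀ d : Fin n → ℕ, (∑ i ∈ V, d i = V.card - 1) →
    Nat.card {pr : (Fin n → Fin n) × Fin n // TreeOn V pr.1 pr.2 ∧ DegOn V pr.1 d}
      = Nat.multinomial V d := by
  classical
  intro k
  induction k with
  | zero =>
    intro V hV hne
    exact absurd (Finset.card_pos.mpr hne) (by omega)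
  | succ k ih =>
    intro V hV hne d hsum
    rcases Nat.eq_zero_or_pos k with hk | hk
    · -- base case : V has exactly one element
      subst hk
      obtain ⟨x, rfl⟩ := Finset.card_eq_one.mp hV
      have hdx : d x = 0 := by simpa using hsum
      rw [Nat.multinomial_singleton, Nat.card_eq_one_iff_unique]
      have hchar : ∀ p r, TreeOn ({x} : Finset (Fin n)) p r → p = id ∧ r = x := by
        rintro p r ⟨hr, hout, hmap, _, _⟩
        refine ⟨funext fun v => ?_, Finset.mem_singleton.mp hr⟩
        by_cases h : v = x
        · subst h
          exact Finset.mem_singleton.mp (hmap v (Finset.mem_singleton_self v))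
        · exact hout v (by simpa using h)
      constructor
      · constructor
        rintro ⟨⟨p, r⟩, ht, _⟩ ⟨⟨p', r'⟩, ht', _⟩
        obtain ⟨hp, hr⟩ := hchar p r ht
        obtain ⟨hp', hr'⟩ := hchar p' r' ht'
        apply Subtype.ext
        simp only [Prod.mk.injEq]
        exact ⟨hp.trans hp'.symm, hr.trans hr'.symm⟩
      · refine ⟨⟨(id, x), ⟨Finset.mem_singleton_self x, fun v _ => rfl,
          fun v hv => hv, fun v hv => ?_, fun v hv => ⟨0, Finset.mem_singleton.mp hv⟩⟩, ?_⟩⟩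
        · simpa using Finset.mem_singleton.mp hv
        · intro i hi
          rw [Finset.mem_singleton.mp hi, hdx, Finset.card_eq_zero,
            Finset.filter_eq_empty_iff]
          intro v hv hcon
          exact hcon.2 (Finset.mem_singleton.mp hv)
    · -- inductive step
      have hc2 : 2 ≤ V.card := by omega
      have hex : ∃ v₀ ∈ V, d v₀ = 0 := by
        by_contra h
        push_neg at h
        have h1 : V.card ≤ ∑ i ∈ V, d i := by
          calc V.card = ∑ _i ∈ V, 1 := by simp
          _ ≤ ∑ i ∈ V, d i :=
            Finset.sum_le_sum fun i hi => Nat.one_le_iff_ne_zero.mpr (h i hi)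
        omega
      obtain ⟨v₀, hv₀, hd0⟩ := hex
      set V' := V.erase v₀ with hV'
      have hV'card : V'.card = k := by
        rw [hV', Finset.card_erase_of_mem hv₀]; omega
      have hV'ne : V'.Nonempty := Finset.card_pos.mp (by omega)
      set A := {pr : (Fin n → Fin n) × Fin n // TreeOn V pr.1 pr.2 ∧ DegOn V pr.1 d} with hA
      have hmem : ∀ a : A, a.1.1 v₀ ∈ V' :=
        fun a => parent_mem hc2 hv₀ hd0 a.2.1 a.2.2
      set F : Fin n → ℕ := fun i => Nat.card {a : A // a.1.1 v₀ = i} with hF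
      have e1 : Nat.card A = ∑ i ∈ V', F i := by
        calc Nat.card A
            = Nat.card (Σ i : {i // i ∈ V'},
              {a : A // (⟨a.1.1 v₀, hmem a⟩ : {i // i ∈ V'}) = i}) :=
              Nat.card_congr (Equiv.sigmaFiberEquiv
                (fun a : A => (⟨a.1.1 v₀, hmem a⟩ : {i // i ∈ V'}))).symm
          _ = ∑ i : {i // i ∈ V'},
              Nat.card {a : A // (⟨a.1.1 v₀, hmem a⟩ : {i // i ∈ V'}) = i} :=
              nat_card_sigma _
          _ = ∑ i : {i // i ∈ V'}, F i.1 := by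
              refine Finset.sum_congr rfl fun i _ => ?_
              exact Nat.card_congr (Equiv.subtypeEquivRight fun a => by
                simp [Subtype.ext_iff])
          _ = ∑ i ∈ V', F i := Finset.sum_coe_sort V' F
      have hzero : ∀ i ∈ V', d i = 0 → F i = 0 := by
        intro i hi hdi
        have : IsEmpty {a : A // a.1.1 v₀ = i} := by
          constructor
          rintro ⟨⟨⟨p, r⟩, ht, hdeg⟩, hpv₀⟩
          have h0 := hdeg i (Finset.mem_of_mem_erase hi)
          rw [hdi, Finset.card_eq_zero, Finset.filter_eq_empty_iff] at h0
          exact h0 hv₀ ⟨hpv₀, Ne.symm (Finset.mem_erase.mp hi).1⟩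
        exact Nat.card_of_isEmpty
      have hFi : ∀ i ∈ V', d i ≠ 0 →
          F i = Nat.multinomial V' (Function.update d i (d i - 1)) := by
        intro i hi hdi
        have hsum'' : ∑ j ∈ V', Function.update d i (d i - 1) j = V'.card - 1 := by
          rw [Finset.sum_update_of_mem hi, ← Finset.erase_eq]
          have h1 := Finset.add_sum_erase V d hv₀
          rw [← hV'] at h1
          have h2 := Finset.add_sum_erase V' d hi
          omega
        rw [← ih V' hV'card hV'ne _ hsum'']
        apply Nat.card_congr
        exact
          { toFun := fun a =>
              ⟨(Function.update a.1.1.1 v₀ v₀, a.1.1.2),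
                shrink hc2 hv₀ hd0 hi a.1.2.1 a.1.2.2 a.2⟩
            invFun := fun b =>
              ⟨⟨(Function.update b.1.1 v₀ i, b.1.2),
                grow hv₀ hd0 hi hdi b.2.1 b.2.2⟩, Function.update_self _ _ _⟩
            left_inv := by
              rintro ⟨⟨⟨p, r⟩, hpr⟩, hp⟩
              apply Subtype.ext
              apply Subtype.ext
              show (Function.update (Function.update p v₀ v₀) v₀ i, r) = (p, r)
              rw [Function.update_idem]
              have : Function.update p v₀ i = p := by
                funext v
                by_cases h : v = v₀
                · subst h; rw [Function.update_self]; exact hp.symm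
                · rw [Function.update_of_ne h]
              rw [this]
            right_inv := by
              rintro ⟨⟨q, r⟩, hq⟩
              apply Subtype.ext
              show (Function.update (Function.update q v₀ i) v₀ v₀, r) = (q, r)
              rw [Function.update_idem]
              have : Function.update q v₀ v₀ = q := by
                funext v
                by_cases h : v = v₀
                · subst h; rw [Function.update_self]
                  exact (hq.1.2.1 v (Finset.notMem_erase v V)).symm
                · rw [Function.update_of_ne h]
              rw [this] }
      have hsplit : ∑ i ∈ V'.filter (fun i => d i ≠ 0), F i = ∑ i ∈ V', F i :=
        Finset.sum_filter_of_ne fun i hi hFi0 hdi0 => hFi0 (hzero i hi hdi0)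
      rw [e1, ← hsplit,
        Finset.sum_congr rfl (fun i hi => hFi i (Finset.mem_filter.mp hi).1
          (Finset.mem_filter.mp hi).2)]
      exact mult_rec hv₀ hd0 hsum hc2

end TreeAux

/-- `p` is the parent function of a rooted tree on `Fin m` with (arbitrary) root `r`:
the unique fixed point of `p` is `r`, and every vertex eventually reaches it. -/
def IsTreeRootedAt (m : ℕ) (p : Fin m → Fin m) (r : Fin m) : Prop :=
  (∀ v, p v = v ↔ v = r) ∧ ∀ v, ∃ l, (p^[l]) v = r

theorem card_rooted_trees_degree_sequence (n : ℕ) (hn : 1 ≤ n) (d : Fin n → ℕ)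
    (hd : ∑ i, d i = n - 1) :
    Nat.card {pr : (Fin n → Fin n) × Fin n //
        IsTreeRootedAt n pr.1 pr.2 ∧
        ∀ i : Fin n, {v : Fin n | pr.1 v = i ∧ v ≠ i}.ncard = d i} =
      Nat.multinomial Finset.univ d := by
  classical
  have hne : (Finset.univ : Finset (Fin n)).Nonempty := ⟨⟨0, hn⟩, Finset.mem_univ _⟩
  have hiff : ∀ pr : (Fin n → Fin n) × Fin n,
      (IsTreeRootedAt n pr.1 pr.2 ∧
        ∀ i : Fin n, {v : Fin n | pr.1 v = i ∧ v ≠ i}.ncard = d i)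
      ↔ (TreeOn Finset.univ pr.1 pr.2 ∧ DegOn Finset.univ pr.1 d) := by
    rintro ⟨p, r⟩
    have hset : ∀ i : Fin n, {v : Fin n | p v = i ∧ v ≠ i}.ncard
        = (Finset.univ.filter (fun v => p v = i ∧ v ≠ i)).card := by
      intro i
      rw [Set.ncard_eq_toFinset_card', Set.toFinset_setOf]
    constructor
    · rintro ⟨⟨hfix, hreach⟩, hdeg⟩
      refine ⟨⟨Finset.mem_univ _, fun v hv => absurd (Finset.mem_univ v) hv,
        fun v _ => Finset.mem_univ _, fun v _ => hfix v, fun v _ => hreach v⟩,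
        fun i _ => by rw [← hset i]; exact hdeg i⟩
    · rintro ⟨⟨_, _, _, hfix, hreach⟩, hdeg⟩
      exact ⟨⟨fun v => hfix v (Finset.mem_univ v), fun v => hreach v (Finset.mem_univ v)⟩,
        fun i => by rw [hset i]; exact hdeg i (Finset.mem_univ i)⟩
  rw [Nat.card_congr (Equiv.subtypeEquivRight hiff)]
  have hcard : (Finset.univ : Finset (Fin n)).card = n := by simp
  exact main_count n n Finset.univ hcard hne d (by rw [hcard]; exact hd)
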